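/- Let c be a positive integer and let G be a finite triangle-free graph with χ(G) > 2c + 1. Then there is an r-leveling (L_0, …, L_r) in G for some integer r ≥ 3 such that the subgraph induced on L_r has chromatic number exactly c + 1 and is both non-degenerate and liberal. -/

import Mathlib

open SimpleGraph

/-- A `4`-sunspot in `G`: seven pairwise distinct vertices whose induced edge set is exactly
`{x₁x₂, x₂x₃, x₃x₄, x₄x₁, x₁y₁, x₂y₂, x₃y₃}`. -/
def IsFourSunspot {V : Type} (G : SimpleGraph V) (x₁ x₂ x₃ x₄ y₁ y₂ y₃ : V) : Prop :=
  [x₁, x₂, x₃, x₄, y₁, y₂, y₃].Nodup ∧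
  G.Adj x₁ x₂ ∧ G.Adj x₂ x₃ ∧ G.Adj x₃ x₄ ∧ G.Adj x₄ x₁ ∧
  G.Adj x₁ y₁ ∧ G.Adj x₂ y₂ ∧ G.Adj x₃ y₃ ∧
  ¬ G.Adj x₁ x₃ ∧ ¬ G.Adj x₂ x₄ ∧
  ¬ G.Adj x₁ y₂ ∧ ¬ G.Adj x₁ y₃ ∧ ¬ G.Adj x₂ y₁ ∧ ¬ G.Adj x₂ y₃ ∧
  ¬ G.Adj x₃ y₁ ∧ ¬ G.Adj x₃ y₂ ∧ ¬ G.Adj x₄ y₁ ∧ ¬ G.Adj x₄ y₂ ∧ ¬ G.Adj x₄ y₃ ∧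
  ¬ G.Adj y₁ y₂ ∧ ¬ G.Adj y₁ y₃ ∧ ¬ G.Adj y₂ y₃

/-- `G` is `4`-sunspot-free if there is no `4`-sunspot in `G`. -/
def FourSunspotFree {V : Type} (G : SimpleGraph V) : Prop :=
  ∀ x₁ x₂ x₃ x₄ y₁ y₂ y₃ : V, ¬ IsFourSunspot G x₁ x₂ x₃ x₄ y₁ y₂ y₃

/-- The `t`-sun: a `t`-vertex cycle (on `Sum.inl` vertices) together with a pendant
(degree-one) neighbor `Sum.inr i` for each cycle vertex `Sum.inl i`. -/
def Sun (t : ℕ) : SimpleGraph (ZMod t ⊕ ZMod t) :=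
  SimpleGraph.fromEdgeSet
    ((Set.range fun i : ZMod t => s(Sum.inl i, Sum.inl (i + 1))) ∪
     (Set.range fun i : ZMod t => s(Sum.inl i, Sum.inr i)))

/-- `G` is `t`-sun-free: no induced subgraph of `G` is a `t`-sun. -/
def SunFree (t : ℕ) {V : Type} (G : SimpleGraph V) : Prop :=
  IsEmpty (Sun t ↪g G)

/-- The bull: a triangle `0,1,2` with pendant vertices `3` (adjacent to `0`)
and `4` (adjacent to `1`). -/
def Bull : SimpleGraph (Fin 5) :=
  SimpleGraph.fromEdgeSet {s(0, 1), s(1, 2), s(0, 2), s(0, 3), s(1, 4)}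

/-- `G` is bull-free: no induced subgraph of `G` is a bull. -/
def BullFree {V : Type} (G : SimpleGraph V) : Prop :=
  IsEmpty (Bull ↪g G)

/-- A hole in `G`: an induced cycle on at least `4` vertices, given as a graph embedding
of the cycle graph. -/
structure Hole {V : Type} (G : SimpleGraph V) where
  len : ℕ
  four_le : 4 ≤ len
  emb : SimpleGraph.cycleGraph len ↪g G

/-- The vertex set of a hole. -/
def Hole.verts {V : Type} {G : SimpleGraph V} (H : Hole G) : Set V :=
  Set.range H.emb

/-- The edge set of a hole. -/
def Hole.edges {V : Type} {G : SimpleGraph V} (H : Hole G) : Set (Sym2 V) :=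
  {e | ∃ i j : Fin H.len, (SimpleGraph.cycleGraph H.len).Adj i j ∧ e = s(H.emb i, H.emb j)}

/-- `G` is liberal: for distinct non-adjacent `x, y`, neither dominates the other. -/
def Liberal {V : Type} (G : SimpleGraph V) : Prop :=
  ∀ x y : V, x ≠ y → ¬ G.Adj x y →
    (G.neighborSet x \ G.neighborSet y).Nonempty ∧
    (G.neighborSet y \ G.neighborSet x).Nonempty

/-- `G` is non-degenerate: every vertex has degree at least `χ(G) - 1`. -/
def NonDegenerate {V : Type} (G : SimpleGraph V) : Prop :=
  ∀ v : V, G.chromaticNumber ≤ ((G.neighborSet v).ncard : ℕ∞) + 1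

/-- `G` is flapless: for every hole `H` of length at least `6` in `G`, there is no `H`-flap,
i.e. no `4`-hole sharing an edge with `H`. -/
def Flapless {V : Type} (G : SimpleGraph V) : Prop :=
  ∀ H : Hole G, 6 ≤ H.len → ∀ F : Hole G, F.len = 4 → ∀ e ∈ F.edges, e ∉ H.edges

/-- An `r`-leveling in `G`: pairwise disjoint nonempty sets `L 0, …, L r` such that every
vertex of `L i` (`i ≥ 1`) has a neighbor in `L (i-1)`, and edges only join consecutive levels. -/
def IsLeveling {V : Type} (G : SimpleGraph V) (r : ℕ) (L : ℕ → Set V) : Prop :=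
  (∀ i, i ≤ r → (L i).Nonempty) ∧
  (∀ i j, i ≤ r → j ≤ r → i ≠ j → Disjoint (L i) (L j)) ∧
  (∀ i, 1 ≤ i → i ≤ r → ∀ v ∈ L i, ∃ u ∈ L (i - 1), G.Adj u v) ∧
  (∀ i j, i ≤ r → j ≤ r → i ≠ j →
    ∀ u ∈ L i, ∀ v ∈ L j, G.Adj u v → i = j + 1 ∨ j = i + 1)

/-- `x` has no sector of length at most `2` in the hole `H`: there is no edge of `H` with both
ends adjacent to `x`, and no path of length `2` in `H` whose ends are adjacent to `x` and whose
middle vertex is not. -/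
def NoSectorLenLe2 {V : Type} (G : SimpleGraph V) (H : Hole G) (x : V) : Prop :=
  (∀ i j : Fin H.len, (SimpleGraph.cycleGraph H.len).Adj i j →
      ¬ (G.Adj x (H.emb i) ∧ G.Adj x (H.emb j))) ∧
  (∀ i j k : Fin H.len, (SimpleGraph.cycleGraph H.len).Adj i j →
      (SimpleGraph.cycleGraph H.len).Adj j k → i ≠ k →
      ¬ (G.Adj x (H.emb i) ∧ ¬ G.Adj x (H.emb j) ∧ G.Adj x (H.emb k)))

/-- `X` and `Y` are anticomplete in `G`: disjoint, with no edge between them. -/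
def Anticomplete {V : Type} (G : SimpleGraph V) (X Y : Set V) : Prop :=
  Disjoint X Y ∧ ∀ x ∈ X, ∀ y ∈ Y, ¬ G.Adj x y

/-- An `H`-flare in `G`: to each vertex `H.emb i` of the hole `H`, assign a set `Φ i` of at
most one vertex, contained in the neighborhood of `H.emb i` and disjoint from `H`. -/
structure IsFlare {V : Type} (G : SimpleGraph V) (H : Hole G) (Φ : Fin H.len → Set V) : Prop where
  subset_nbhd : ∀ i, Φ i ⊆ G.neighborSet (H.emb i) \ H.verts
  subsingleton : ∀ i, (Φ i).Subsingleton

/-- A flare is full if `|Φ i| = 1` for every `i`. -/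
def IsFullFlare {V : Type} (G : SimpleGraph V) (H : Hole G) (Φ : Fin H.len → Set V) : Prop :=
  IsFlare G H Φ ∧ ∀ i, (Φ i).Nonempty

/-- A flare `Φ` is `d`-safe: for distinct hole vertices at distance at most `d` in `H`,
`Φ(h)` and `Φ[h'] = Φ(h') ∪ {h'}` are anticomplete in `G`. -/
def DSafe {V : Type} (G : SimpleGraph V) (H : Hole G) (Φ : Fin H.len → Set V) (d : ℕ) : Prop :=
  ∀ i j : Fin H.len, i ≠ j → (SimpleGraph.cycleGraph H.len).dist i j ≤ d →
    Anticomplete G (Φ i) (Φ j ∪ {H.emb j})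

section PROOFSTART
variable {V : Type} {G : SimpleGraph V}

theorem aux_colorable_induce_mono {A B : Set V} (h : A ⊆ B) {n : ℕ}
    (hB : (G.induce B).Colorable n) : (G.induce A).Colorable n := by
  obtain ⟨f⟩ := hB
  exact ⟨f.comp ⟨fun x => ⟨x.1, h x.2⟩, fun hadj => hadj⟩⟩

theorem aux_colorable_union {A B : Set V} {n : ℕ}
    (hAB : ∀ a ∈ A, ∀ b ∈ B, ¬ G.Adj a b)
    (hA : (G.induce A).Colorable n) (hB : (G.induce B).Colorable n) :
    (G.induce (A ∪ B)).Colorable n := by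
  classical
  obtain ⟨f⟩ := hA; obtain ⟨g⟩ := hB
  refine ⟨SimpleGraph.Coloring.mk
    (fun z => if h : z.1 ∈ A then f ⟨z.1, h⟩ else g ⟨z.1, z.2.resolve_left h⟩) ?_⟩
  rintro ⟨z, hz⟩ ⟨w, hw⟩ hadj
  have hadj' : G.Adj z w := hadj
  by_cases hzA : z ∈ A <;> by_cases hwA : w ∈ A <;> simp only [hzA, hwA, dif_pos, dif_neg]
  · exact f.valid hadj'
  · exact absurd hadj' (hAB z hzA w (hw.resolve_left hwA))
  · exact absurd hadj'.symm (hAB w hwA z (hz.resolve_left hzA))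
  · exact g.valid hadj'

theorem aux_colorable_of_diff_indep {A I : Set V} {n : ℕ}
    (hI : ∀ a ∈ I, ∀ b ∈ I, ¬ G.Adj a b)
    (h : (G.induce (A \ I)).Colorable n) : (G.induce A).Colorable (n+1) := by
  classical
  obtain ⟨f⟩ := h
  refine ⟨SimpleGraph.Coloring.mk
    (fun z => if hz : z.1 ∈ I then Fin.last n else (f ⟨z.1, ⟨z.2, hz⟩⟩).castSucc) ?_⟩
  rintro ⟨z, hz⟩ ⟨w, hw⟩ hadj
  have hadj' : G.Adj z w := hadj
  by_cases hzI : z ∈ I <;> by_cases hwI : w ∈ I <;> simp only [hzI, hwI, dif_pos, dif_neg]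
  · exact absurd hadj' (hI z hzI w hwI)
  · exact (Fin.castSucc_lt_last _).ne'
  · exact (Fin.castSucc_lt_last _).ne
  · intro hc
    exact f.valid (by exact hadj' : (G.induce (A \ I)).Adj ⟨z, hz, hzI⟩ ⟨w, hw, hwI⟩)
      (Fin.castSucc_injective _ hc)

theorem aux_exists_minimal_noncolorable [Fintype V] {X : Set V} {n : ℕ}
    (hX : ¬ (G.induce X).Colorable n) :
    ∃ t : Finset V, ↑t ⊆ X ∧ ¬ (G.induce (↑t : Set V)).Colorable n ∧
      ∀ s : Finset V, ↑s ⊆ X → s.card < t.card → (G.induce (↑s : Set V)).Colorable n := by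
  classical
  set 𝒮 : Finset (Finset V) :=
    Finset.univ.powerset.filter
      (fun s => (↑s : Set V) ⊆ X ∧ ¬ (G.induce (↑s : Set V)).Colorable n) with h𝒮
  have hmem : X.toFinset ∈ 𝒮 := by
    simp only [h𝒮, Finset.mem_filter, Finset.mem_powerset, Finset.subset_univ, true_and]
    constructor
    · rw [Set.coe_toFinset]
    · rw [Set.coe_toFinset]; exact hX
  obtain ⟨t, ht, hmin⟩ := Finset.exists_min_image 𝒮 Finset.card ⟨_, hmem⟩
  rw [h𝒮, Finset.mem_filter] at ht
  refine ⟨t, ht.2.1, ht.2.2, fun s hs hcard => ?_⟩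
  by_contra hsc
  have : s ∈ 𝒮 := by
    simp only [h𝒮, Finset.mem_filter, Finset.mem_powerset, Finset.subset_univ, true_and]
    exact ⟨hs, hsc⟩
  exact absurd (hmin s this) (by omega)

theorem aux_noncolorable_nonempty {t : Finset V} {n : ℕ}
    (h : ¬ (G.induce (↑t : Set V)).Colorable n) : t.Nonempty := by
  rcases Finset.eq_empty_or_nonempty t with he | hne
  · subst he
    exact absurd ⟨SimpleGraph.Coloring.mk (fun z => absurd z.2 (by simp))
      (fun {a b} _ => absurd a.2 (by simp))⟩ h
  · exact hne

theorem aux_colorable_image_val {S : Set V} {T : Set ↥S} {n : ℕ} :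
    (G.induce (Subtype.val '' T)).Colorable n ↔ ((G.induce S).induce T).Colorable n := by
  constructor
  · rintro ⟨f⟩
    exact ⟨f.comp ⟨fun x => ⟨x.1.1, ⟨x.1, x.2, rfl⟩⟩, fun hadj => hadj⟩⟩
  · rintro ⟨f⟩
    refine ⟨SimpleGraph.Coloring.mk
      (fun z => f ⟨Classical.choose z.2, (Classical.choose_spec z.2).1⟩) ?_⟩
    rintro ⟨z, hz⟩ ⟨w, hw⟩ hadj
    have hadj' : G.Adj z w := hadj
    have hz' := (Classical.choose_spec hz).2
    have hw' := (Classical.choose_spec hw).2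
    intro hc
    refine f.valid ?_ hc
    show G.Adj (Classical.choose hz).1 (Classical.choose hw).1
    rw [hz', hw']
    exact hadj'

theorem aux_critical_lemma [Fintype V] [DecidableEq V] {t : Finset V} {c : ℕ} (hc : 0 < c)
    (hnc : ¬ (G.induce (↑t : Set V)).Colorable c)
    (herase : ∀ x ∈ t, (G.induce (↑(t.erase x) : Set V)).Colorable c) :
    (G.induce (↑t : Set V)).chromaticNumber = (c : ℕ∞) + 1 ∧
      NonDegenerate (G.induce (↑t : Set V)) ∧ Liberal (G.induce (↑t : Set V)) := by
  classical
  have htne : t.Nonempty := aux_noncolorable_nonempty hnc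
  have ext : ∀ x ∈ t, ∀ (f : (G.induce (↑(t.erase x) : Set V)).Coloring (Fin c)) (κ : Fin c),
      (∀ (y : V) (hy : y ∈ (↑(t.erase x) : Set V)), G.Adj x y → f ⟨y, hy⟩ ≠ κ) →
      (G.induce (↑t : Set V)).Colorable c := by
    intro x hx f κ hκ
    have hmem : ∀ z : V, z ∈ (↑t : Set V) → z ≠ x → z ∈ (↑(t.erase x) : Set V) := by
      intro z hz hzx
      simp only [Finset.coe_erase, Set.mem_diff, Set.mem_singleton_iff]
      exact ⟨hz, hzx⟩
    refine ⟨SimpleGraph.Coloring.mk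
      (fun z => if hz : z.1 = x then κ else f ⟨z.1, hmem z.1 z.2 hz⟩) ?_⟩
    rintro ⟨z, hz⟩ ⟨w, hw⟩ hadj
    have hadj' : G.Adj z w := hadj
    dsimp only
    by_cases hzx : z = x <;> by_cases hwx : w = x
    · exact absurd (hzx.trans hwx.symm) (G.ne_of_adj hadj')
    · rw [dif_pos hzx, dif_neg hwx]
      exact fun hcc => hκ w _ (hzx ▸ hadj') hcc.symm
    · rw [dif_neg hzx, dif_pos hwx]
      exact fun hcc => hκ z _ (hwx ▸ hadj'.symm) hcc
    · rw [dif_neg hzx, dif_neg hwx]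
      intro hcc
      exact f.valid (by exact hadj' :
        (G.induce (↑(t.erase x) : Set V)).Adj ⟨z, hmem z hz hzx⟩ ⟨w, hmem w hw hwx⟩) hcc
  obtain ⟨x0, hx0⟩ := htne
  have hcol1 : (G.induce (↑t : Set V)).Colorable (c+1) := by
    have h1 := herase x0 hx0
    have hI : ∀ a ∈ ({x0} : Set V), ∀ b ∈ ({x0} : Set V), ¬ G.Adj a b := by
      rintro a ha b hb
      simp only [Set.mem_singleton_iff] at ha hb
      subst ha; subst hb; exact G.irrefl
    have h2 : (G.induce ((↑t : Set V) \ {x0})).Colorable c := by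
      rwa [← Finset.coe_erase]
    exact aux_colorable_of_diff_indep hI h2
  have hchrom : (G.induce (↑t : Set V)).chromaticNumber = (c : ℕ∞) + 1 := by
    apply le_antisymm
    · have h1 := hcol1.chromaticNumber_le
      calc (G.induce (↑t:Set V)).chromaticNumber ≤ ((c+1 : ℕ) : ℕ∞) := h1
        _ = (c : ℕ∞) + 1 := by push_cast; ring
    · refine (ENat.add_one_le_iff (by simp)).mpr ?_
      by_contra hle; push_neg at hle
      exact hnc (chromaticNumber_le_iff_colorable.mp hle)
  have hdeg : ∀ z : ↥(↑t : Set V), c ≤ ((G.induce (↑t : Set V)).neighborSet z).ncard := by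
    intro z
    by_contra hlt
    push_neg at hlt
    set N := (G.induce (↑t : Set V)).neighborSet z with hN
    have hNfin : N.Finite := Set.toFinite N
    have hxm : z.1 ∈ t := z.2
    obtain ⟨f⟩ := herase z.1 hxm
    set colorOf : ↥(↑t : Set V) → Fin c := fun w =>
      if h : w.1 ∈ (↑(t.erase z.1) : Set V) then f ⟨w.1, h⟩ else ⟨0, hc⟩ with hco
    have hex : ∃ κ : Fin c, ∀ w ∈ N, colorOf w ≠ κ := by
      by_contra hall
      push_neg at hall
      have hsurj : Set.SurjOn colorOf (↑hNfin.toFinset) (↑(Finset.univ : Finset (Fin c))) := by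
        intro κ _
        obtain ⟨w, hwN, hwc⟩ := hall κ
        exact ⟨w, by simpa using hwN, hwc⟩
      have hcard := Finset.card_le_card_of_surjOn colorOf hsurj
      rw [Finset.card_univ, Fintype.card_fin] at hcard
      rw [Set.ncard_eq_toFinset_card _ hNfin] at hlt
      omega
    obtain ⟨κ, hκ⟩ := hex
    refine hnc (ext z.1 hxm f κ ?_)
    intro y hy hady
    have hyt : y ∈ (↑t : Set V) := by
      simp only [Finset.coe_erase, Set.mem_diff] at hy
      exact hy.1
    have hyN : (⟨y, hyt⟩ : ↥(↑t : Set V)) ∈ N := by exact hady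
    have h2 := hκ _ hyN
    rw [hco] at h2
    simpa only [dif_pos hy] using h2
  have key : ∀ x y : ↥(↑t : Set V), x ≠ y → ¬ (G.induce (↑t : Set V)).Adj x y →
      ((G.induce (↑t : Set V)).neighborSet x \ (G.induce (↑t : Set V)).neighborSet y).Nonempty := by
    intro x y hxy hnadj
    rw [Set.nonempty_iff_ne_empty]
    intro hemp
    have hsub : ∀ w, (G.induce (↑t : Set V)).Adj x w → (G.induce (↑t : Set V)).Adj y w := by
      intro w hw
      by_contra hnw
      exact (Set.eq_empty_iff_forall_notMem.mp hemp w) ⟨hw, hnw⟩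
    obtain ⟨f⟩ := herase x.1 x.2
    have hyx : y.1 ∈ (↑(t.erase x.1) : Set V) := by
      simp only [Finset.coe_erase, Set.mem_diff, Set.mem_singleton_iff]
      exact ⟨y.2, fun h => hxy (Subtype.ext (by rw [h]))⟩
    refine hnc (ext x.1 x.2 f (f ⟨y.1, hyx⟩) ?_)
    intro z hz hadz
    have hzt : z ∈ (↑t : Set V) := by
      simp only [Finset.coe_erase, Set.mem_diff] at hz
      exact hz.1
    have hadjx : (G.induce (↑t : Set V)).Adj x ⟨z, hzt⟩ := by exact hadz
    have hadjy := hsub _ hadjx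
    intro hcc
    exact f.valid (by exact hadjy :
      (G.induce (↑(t.erase x.1) : Set V)).Adj ⟨y.1, hyx⟩ ⟨z, hz⟩) hcc.symm
  refine ⟨hchrom, ?_, ?_⟩
  · intro z
    rw [hchrom]
    have := hdeg z
    exact add_le_add_left (by exact_mod_cast this : (c : ℕ∞) ≤ _) 1
  · intro x y hxy hnadj
    exact ⟨key x y hxy hnadj, key y x (Ne.symm hxy) (fun h => hnadj h.symm)⟩

end PROOFSTART

section H2
variable {W : Type} {K : SimpleGraph W}

theorem aux_adj_dist_le (hconn : K.Connected) {x y : W} (h : K.Adj x y) (v : W) :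
    K.dist v y ≤ K.dist v x + 1 := by
  have h1 := hconn.dist_triangle (u := v) (v := x) (w := y)
  have h2 : K.dist x y = 1 := SimpleGraph.dist_eq_one_iff_adj.mpr h
  omega

theorem aux_exists_pred (hconn : K.Connected) {v x : W} {i : ℕ}
    (h : K.dist v x = i + 1) : ∃ y, K.Adj y x ∧ K.dist v y = i := by
  obtain ⟨q, hq⟩ := hconn.exists_walk_length_eq_dist x v
  rw [SimpleGraph.dist_comm, h] at hq
  cases q with
  | nil => simp at hq
  | @cons _ y _ hxy q' =>
    refine ⟨y, hxy.symm, ?_⟩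
    have h1 : K.dist v y ≤ i := by
      have := SimpleGraph.dist_le q'.reverse
      rwa [SimpleGraph.Walk.length_reverse, (by simpa using hq : q'.length = i)] at this
    have h2 := aux_adj_dist_le hconn hxy.symm v
    omega

theorem aux_parity_coloring (hconn : K.Connected) (v : W) (c : ℕ) (hc : 0 < c)
    (htri : ∀ a b x : W, K.Adj x a → K.Adj x b → ¬ K.Adj a b)
    (h2 : (K.induce {x | K.dist v x = 2}).Colorable (c+1))
    (hge : ∀ i, 3 ≤ i → (K.induce {x | K.dist v x = i}).Colorable c) :
    K.Colorable (2*c+1) := by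
  classical
  set D : ℕ → Set W := fun i => {x | K.dist v x = i} with hD
  have hmem : ∀ x : W, x ∈ D (K.dist v x) := fun x => rfl
  set F : ∀ i : ℕ, ↥(D i) → Fin c := fun i =>
    if h : 3 ≤ i then (hge i h).some else fun _ => ⟨0, hc⟩ with hF
  have hFvalid : ∀ i, i ≠ 2 → ∀ a b : ↥(D i), K.Adj a.1 b.1 → F i a ≠ F i b := by
    intro i hi2 a b hab
    by_cases h3 : 3 ≤ i
    · rw [hF]; simp only [dif_pos h3]
      exact (hge i h3).some.valid (by exact hab)
    · exfalso
      interval_cases i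
      · have ha0 : K.dist v a.1 = 0 := a.2
        have hb0 : K.dist v b.1 = 0 := b.2
        have ha := (hconn.dist_eq_zero_iff).mp ha0
        have hb := (hconn.dist_eq_zero_iff).mp hb0
        rw [← ha, ← hb] at hab
        exact K.irrefl hab
      · have ha : K.Adj v a.1 := SimpleGraph.dist_eq_one_iff_adj.mp a.2
        have hb : K.Adj v b.1 := SimpleGraph.dist_eq_one_iff_adj.mp b.2
        exact htri a.1 b.1 v ha hb hab
      · exact hi2 rfl
  obtain ⟨f2⟩ := h2
  set g : W → Fin (c+1) ⊕ Fin c := fun x =>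
    if hx2 : K.dist v x = 2 then Sum.inl (f2 ⟨x, hx2⟩)
    else if Even (K.dist v x) then Sum.inl (Fin.castLE (Nat.le_succ c) (F (K.dist v x) ⟨x, hmem x⟩))
    else Sum.inr (F (K.dist v x) ⟨x, hmem x⟩) with hg
  have hginl : ∀ x, ¬ Even (K.dist v x) → g x = Sum.inr (F (K.dist v x) ⟨x, hmem x⟩) := by
    intro x hx
    have hx2 : ¬ K.dist v x = 2 := fun h => hx (h ▸ (by decide : Even 2))
    simp only [hg]
    rw [dif_neg hx2, if_neg hx]
  have hcast : ∀ (x : W) (i : ℕ) (h : K.dist v x = i), F (K.dist v x) ⟨x, hmem x⟩ = F i ⟨x, h⟩ := by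
    intro x i h
    subst h
    rfl
  have main : ∀ a b : W, K.Adj a b → K.dist v a = K.dist v b → g a ≠ g b := by
    intro a b hab hde
    by_cases ha2 : K.dist v a = 2
    · have hb2 : K.dist v b = 2 := hde ▸ ha2
      simp only [hg]
      rw [dif_pos ha2, dif_pos hb2]
      exact fun hcc => f2.valid (by exact hab) (Sum.inl.inj hcc)
    · have hb2 : ¬ K.dist v b = 2 := by rw [← hde]; exact ha2
      have hFne : F (K.dist v a) ⟨a, hmem a⟩ ≠ F (K.dist v b) ⟨b, hmem b⟩ := by
        rw [hcast b (K.dist v a) hde.symm]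
        exact hFvalid (K.dist v a) ha2 ⟨a, hmem a⟩ ⟨b, hde.symm⟩ hab
      by_cases hea : Even (K.dist v a)
      · have heb : Even (K.dist v b) := hde ▸ hea
        simp only [hg]
        rw [dif_neg ha2, dif_neg hb2, if_pos hea, if_pos heb]
        intro hcc
        exact hFne (Fin.castLE_injective _ (Sum.inl.inj hcc))
      · have heb : ¬ Even (K.dist v b) := hde ▸ hea
        simp only [hg]
        rw [dif_neg ha2, dif_neg hb2, if_neg hea, if_neg heb]
        intro hcc
        exact hFne (Sum.inr.inj hcc)
  have step : ∀ a b : W, K.Adj a b → K.dist v b = K.dist v a + 1 → g a ≠ g b := by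
    intro a b _ hb
    by_cases hea : Even (K.dist v a)
    · have heb : ¬ Even (K.dist v b) := by rw [hb]; simpa [Nat.even_add_one] using hea
      rw [hginl b heb]
      simp only [hg]
      by_cases ha2 : K.dist v a = 2
      · rw [dif_pos ha2]; simp
      · rw [dif_neg ha2, if_pos hea]; simp
    · have heb : Even (K.dist v b) := by rw [hb]; simpa [Nat.even_add_one] using hea
      rw [hginl a hea]
      simp only [hg]
      by_cases hb2 : K.dist v b = 2
      · rw [dif_pos hb2]; simp
      · rw [dif_neg hb2, if_pos heb]; simp
  have hvalid : ∀ a b : W, K.Adj a b → g a ≠ g b := by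
    intro a b hab
    have hd1 : K.dist v b ≤ K.dist v a + 1 := aux_adj_dist_le hconn hab v
    have hd2 : K.dist v a ≤ K.dist v b + 1 := aux_adj_dist_le hconn hab.symm v
    rcases Nat.lt_trichotomy (K.dist v a) (K.dist v b) with hlt | heq | hgt
    · exact step a b hab (by omega)
    · exact main a b hab heq
    · exact (step b a hab.symm (by omega)).symm
  have hcard : Fintype.card (Fin (c+1) ⊕ Fin c) ≤ 2*c+1 := by
    simp only [Fintype.card_sum, Fintype.card_fin]
    omega
  exact Colorable.mono hcard ((SimpleGraph.Coloring.mk g (fun {a b} h => hvalid a b h)).colorable)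
end H2

/-- If `G` is finite, triangle-free, and `χ(G) > 2c + 1`, then there is an
`r`-leveling `(L 0, …, L r)` in `G` with `r ≥ 3` such that the subgraph induced on `L r`
has chromatic number exactly `c + 1` and is non-degenerate and liberal. -/
theorem stmt_7 {V : Type} [Fintype V] (c : ℕ) (hc : 0 < c) (G : SimpleGraph V)
    (htri : G.CliqueFree 3)
    (hchi : (2 * c + 1 : ℕ∞) < G.chromaticNumber) :
    ∃ (r : ℕ) (L : ℕ → Set V), 3 ≤ r ∧ IsLeveling G r L ∧
      (G.induce (L r)).chromaticNumber = (c : ℕ∞) + 1 ∧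
      NonDegenerate (G.induce (L r)) ∧
      Liberal (G.induce (L r)) := by
  classical
  have hGnc : ¬ G.Colorable (2*c+1) := by
    intro h
    have h1 := h.chromaticNumber_le
    have h2 : ((2*c+1 : ℕ) : ℕ∞) = (2*(c:ℕ∞)+1 : ℕ∞) := by push_cast; ring
    rw [h2] at h1
    exact absurd hchi (not_lt.mpr h1)
  have hGuniv : ¬ (G.induce (Set.univ : Set V)).Colorable (2*c+1) := by
    rintro ⟨f⟩
    exact hGnc ⟨f.comp ⟨fun x => ⟨x, trivial⟩, fun h => h⟩⟩
  obtain ⟨s₀, hs₀X, hs₀nc, hs₀min⟩ := aux_exists_minimal_noncolorable hGuniv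
  have hs₀min' : ∀ A : Set V, A ⊆ ↑s₀ → A ≠ ↑s₀ → (G.induce A).Colorable (2*c+1) := by
    intro A hA hne
    have hAfin : A.Finite := Set.toFinite A
    have h1 : hAfin.toFinset ⊆ s₀ := by
      intro x hx
      exact hA (hAfin.mem_toFinset.mp hx)
    have hne' : hAfin.toFinset ≠ s₀ := by
      intro h
      exact hne (by rw [← hAfin.coe_toFinset, h])
    have hss : hAfin.toFinset ⊂ s₀ := lt_of_le_of_ne h1 hne'
    have := hs₀min hAfin.toFinset (by simp) (Finset.card_lt_card hss)
    rwa [Set.Finite.coe_toFinset] at this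
  have hs₀ne : s₀.Nonempty := aux_noncolorable_nonempty hs₀nc
  obtain ⟨v0, hv0⟩ := hs₀ne
  have hv0S : v0 ∈ (↑s₀ : Set V) := hv0
  haveI : Nonempty ↥(↑s₀ : Set V) := ⟨⟨v0, hv0S⟩⟩
  set S : Set V := (↑s₀ : Set V) with hS
  set H : SimpleGraph ↥S := G.induce S with hH
  have hHnc : ¬ H.Colorable (2*c+1) := hs₀nc
  set vr : ↥S := ⟨v0, hv0S⟩ with hvr
  have hconn : H.Connected := by
    have hreach : ∀ x : ↥S, H.Reachable vr x := by
      by_contra hnr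
      push_neg at hnr
      obtain ⟨x₀, hx₀⟩ := hnr
      set R : Set ↥S := {x | H.Reachable vr x} with hR
      set A : Set V := Subtype.val '' R with hA
      set B : Set V := S \ A with hB
      have hAS : A ⊆ S := by rintro a ⟨y, _, rfl⟩; exact y.2
      have hx₀A : x₀.1 ∉ A := by
        rintro ⟨y, hy, hyx⟩
        exact hx₀ (by rwa [Subtype.ext hyx] at hy)
      have hAne : A ≠ S := fun h => hx₀A (h.symm ▸ x₀.2)
      have hv0A : v0 ∈ A := ⟨vr, Reachable.refl vr, rfl⟩
      have hBne : B ≠ S := by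
        intro h
        have : v0 ∈ B := h.symm ▸ hv0S
        exact this.2 hv0A
      have hcA := hs₀min' A hAS hAne
      have hcB := hs₀min' B Set.diff_subset hBne
      have hnoedge : ∀ a ∈ A, ∀ b ∈ B, ¬ G.Adj a b := by
        rintro a ⟨y, hy, rfl⟩ b hb hadj
        have hbS : b ∈ S := hb.1
        have hadjH : H.Adj y ⟨b, hbS⟩ := hadj
        have : (⟨b, hbS⟩ : ↥S) ∈ R := hy.trans hadjH.reachable
        exact hb.2 ⟨⟨b, hbS⟩, this, rfl⟩
      have hcAB := aux_colorable_union hnoedge hcA hcB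
      rw [Set.union_diff_cancel hAS] at hcAB
      exact hHnc hcAB
    exact Connected.mk (fun x y => (hreach x).symm.trans (hreach y))
  have htriH : ∀ a b x : ↥S, H.Adj x a → H.Adj x b → ¬ H.Adj a b := by
    intro a b x h1 h2 h3
    exact htri {x.1, a.1, b.1} (SimpleGraph.is3Clique_triple_iff.mpr ⟨h1, h2, h3⟩)
  have htriG : ∀ u a b : V, G.Adj u a → G.Adj u b → ¬ G.Adj a b := by
    intro u a b h1 h2 h3
    exact htri {u, a, b} (SimpleGraph.is3Clique_triple_iff.mpr ⟨h1, h2, h3⟩)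
  set D : ℕ → Set ↥S := fun i => {x | H.dist vr x = i} with hD
  by_cases hcase : ∀ i, 3 ≤ i → (H.induce (D i)).Colorable c
  · -- CASE 2 : all levels ≥ 3 are c-colorable
    have hD2 : ¬ (H.induce (D 2)).Colorable (c+1) := by
      intro h
      exact hHnc (aux_parity_coloring hconn vr c hc htriH h hcase)
    have hX2 : ¬ (G.induce (Subtype.val '' D 2)).Colorable (c+1) := by
      intro h
      exact hD2 (aux_colorable_image_val.mp h)
    obtain ⟨tW, htWsub, htWnc, htWmin⟩ := aux_exists_minimal_noncolorable hX2
    obtain ⟨w0, hw0⟩ := aux_noncolorable_nonempty htWnc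
    obtain ⟨w0', hw0'D, hw0'v⟩ := htWsub hw0
    have hw0'2 : H.dist vr w0' = 2 := hw0'D
    obtain ⟨u', hu'adj, hu'd⟩ := aux_exists_pred hconn (by rw [hw0'2] : H.dist vr w0' = 1 + 1)
    set u : V := u'.1 with hu
    have hvru : H.Adj vr u' := SimpleGraph.dist_eq_one_iff_adj.mp hu'd
    have hNu : ∀ a ∈ G.neighborSet u, ∀ b ∈ G.neighborSet u, ¬ G.Adj a b :=
      fun a ha b hb => htriG u a b ha hb
    have hdiff : ¬ (G.induce ((↑tW : Set V) \ G.neighborSet u)).Colorable c := by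
      intro h
      apply htWnc
      have hid : (↑tW : Set V) \ ((↑tW : Set V) ∩ G.neighborSet u)
          = (↑tW : Set V) \ G.neighborSet u := by
        ext z; constructor
        · rintro ⟨h1, h2⟩; exact ⟨h1, fun hn => h2 ⟨h1, hn⟩⟩
        · rintro ⟨h1, h2⟩; exact ⟨h1, fun hn => h2 hn.2⟩
      exact aux_colorable_of_diff_indep (I := (↑tW : Set V) ∩ G.neighborSet u)
        (fun a ha b hb => hNu a ha.2 b hb.2) (by rwa [hid])
    obtain ⟨t₀, ht₀sub, ht₀nc, ht₀min⟩ := aux_exists_minimal_noncolorable hdiff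
    have herase : ∀ x ∈ t₀, (G.induce (↑(t₀.erase x) : Set V)).Colorable c := by
      intro x hx
      refine ht₀min _ ?_ (Finset.card_erase_lt_of_mem hx)
      intro z hz
      exact ht₀sub (Finset.mem_coe.mpr (Finset.mem_of_mem_erase (Finset.mem_coe.mp hz)))
    obtain ⟨hchrom, hnd, hlib⟩ := aux_critical_lemma hc ht₀nc herase
    have ht₀ne : t₀.Nonempty := aux_noncolorable_nonempty ht₀nc
    have ht₀rep : ∀ z ∈ (↑t₀ : Set V), ∃ z' : ↥S, z'.1 = z ∧ H.dist vr z' = 2 := by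
      intro z hz
      obtain ⟨z', hz'D, hz'v⟩ := htWsub (ht₀sub hz).1
      exact ⟨z', hz'v, hz'D⟩
    have ht₀Nu : ∀ z ∈ (↑t₀ : Set V), ¬ G.Adj u z := by
      intro z hz hadj
      exact (ht₀sub hz).2 hadj
    set L2 : Set V := (Subtype.val '' D 1) ∩ {z | ∃ w ∈ t₀, G.Adj z w} with hL2
    set L : ℕ → Set V := fun j => if j = 0 then {u} else if j = 1 then {v0}
      else if j = 2 then L2 else (↑t₀ : Set V) with hL
    have hLeq0 : L 0 = {u} := by simp [hL]
    have hLeq1 : L 1 = {v0} := by simp [hL]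
    have hLeq2 : L 2 = L2 := by simp [hL]
    have hLeq3 : L 3 = (↑t₀ : Set V) := by simp [hL]
    have hL2fact : ∀ z ∈ L2, ∃ z' : ↥S, z'.1 = z ∧ H.dist vr z' = 1 := by
      rintro z ⟨⟨z', hz'D, rfl⟩, -⟩
      exact ⟨z', rfl, hz'D⟩
    have hL2adj_v0 : ∀ z ∈ L2, G.Adj v0 z := by
      intro z hz
      obtain ⟨z', hz'v, hz'd⟩ := hL2fact z hz
      have hh : H.Adj vr z' := SimpleGraph.dist_eq_one_iff_adj.mp hz'd
      rw [← hz'v]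
      exact hh
    have ht₀L2 : ∀ z ∈ (↑t₀ : Set V), ∃ y ∈ L2, G.Adj y z := by
      intro z hz
      obtain ⟨z', hz'v, hz'd⟩ := ht₀rep z hz
      obtain ⟨p, hpadj, hpd⟩ := aux_exists_pred hconn (by rw [hz'd] : H.dist vr z' = 1 + 1)
      have hpz : G.Adj p.1 z := by rw [← hz'v]; exact hpadj
      exact ⟨p.1, ⟨⟨p, hpd, rfl⟩, ⟨z, Finset.mem_coe.mp hz, hpz⟩⟩, hpz⟩
    have hu_nL2 : u ∉ L2 := by
      rintro ⟨-, ⟨w, hw, hadj⟩⟩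
      exact ht₀Nu w (Finset.mem_coe.mpr hw) hadj
    have hv0_nL2 : v0 ∉ L2 := by
      rintro ⟨⟨z', hz'd, hz'v⟩, -⟩
      have hzz : z' = vr := Subtype.ext hz'v
      have hz'd1 : H.dist vr z' = 1 := hz'd
      rw [hzz, SimpleGraph.dist_self] at hz'd1
      omega
    have hu_ne_v0 : u ≠ v0 := by
      intro h
      have hzz : u' = vr := Subtype.ext h
      rw [hzz, SimpleGraph.dist_self] at hu'd
      omega
    have hu_nt₀ : u ∉ (↑t₀ : Set V) := by
      intro h
      obtain ⟨z', hz'v, hz'd⟩ := ht₀rep u h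
      have hzz : z' = u' := Subtype.ext hz'v
      rw [hzz, hu'd] at hz'd
      omega
    have hv0_nt₀ : v0 ∉ (↑t₀ : Set V) := by
      intro h
      obtain ⟨z', hz'v, hz'd⟩ := ht₀rep v0 h
      have hzz : z' = vr := Subtype.ext hz'v
      rw [hzz, SimpleGraph.dist_self] at hz'd
      omega
    have hL2_nt₀ : ∀ z ∈ L2, z ∉ (↑t₀ : Set V) := by
      intro z hz h
      obtain ⟨z1, hz1v, hz1d⟩ := hL2fact z hz
      obtain ⟨z2, hz2v, hz2d⟩ := ht₀rep z h
      have hzz : z1 = z2 := Subtype.ext (hz1v.trans hz2v.symm)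
      rw [hzz, hz2d] at hz1d
      omega
    have hno_uL2 : ∀ z ∈ L2, ¬ G.Adj u z := by
      intro z hz hadj
      obtain ⟨z', hz'v, hz'd⟩ := hL2fact z hz
      have h1 : H.Adj vr z' := SimpleGraph.dist_eq_one_iff_adj.mp hz'd
      have h2 : H.Adj u' z' := by rw [← hz'v] at hadj; exact hadj
      exact htriH u' z' vr hvru h1 h2
    have hno_v0t₀ : ∀ z ∈ (↑t₀ : Set V), ¬ G.Adj v0 z := by
      intro z hz hadj
      obtain ⟨z', hz'v, hz'd⟩ := ht₀rep z hz
      have h1 : H.Adj vr z' := by rw [← hz'v] at hadj; exact hadj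
      have h2 := SimpleGraph.dist_eq_one_iff_adj.mpr h1
      rw [hz'd] at h2
      omega
    have hGuv0 : G.Adj u v0 := by exact hvru.symm
    have hdis : ∀ (P Q : Set V), (∀ z ∈ P, z ∉ Q) → Disjoint P Q := by
      intro P Q h
      rw [Set.disjoint_left]
      exact h
    refine ⟨3, L, le_refl 3, ⟨?_, ?_, ?_, ?_⟩, ?_, ?_, ?_⟩
    · intro i hi
      interval_cases i
      · rw [hLeq0]; exact Set.singleton_nonempty u
      · rw [hLeq1]; exact Set.singleton_nonempty v0
      · rw [hLeq2]
        obtain ⟨w1, hw1⟩ := ht₀ne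
        obtain ⟨y, hy, -⟩ := ht₀L2 w1 (Finset.mem_coe.mpr hw1)
        exact ⟨y, hy⟩
      · rw [hLeq3]; exact Finset.coe_nonempty.mpr ht₀ne
    · intro i j hi hj hne
      interval_cases i <;> interval_cases j
      · exact absurd rfl hne
      · rw [hLeq0, hLeq1]; exact Set.disjoint_singleton.mpr hu_ne_v0
      · rw [hLeq0, hLeq2]; exact Set.disjoint_singleton_left.mpr hu_nL2
      · rw [hLeq0, hLeq3]; exact Set.disjoint_singleton_left.mpr hu_nt₀
      · rw [hLeq1, hLeq0]; exact (Set.disjoint_singleton.mpr hu_ne_v0).symm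
      · exact absurd rfl hne
      · rw [hLeq1, hLeq2]; exact Set.disjoint_singleton_left.mpr hv0_nL2
      · rw [hLeq1, hLeq3]; exact Set.disjoint_singleton_left.mpr hv0_nt₀
      · rw [hLeq2, hLeq0]; exact (Set.disjoint_singleton_left.mpr hu_nL2).symm
      · rw [hLeq2, hLeq1]; exact (Set.disjoint_singleton_left.mpr hv0_nL2).symm
      · exact absurd rfl hne
      · rw [hLeq2, hLeq3]; exact hdis _ _ hL2_nt₀
      · rw [hLeq3, hLeq0]; exact (Set.disjoint_singleton_left.mpr hu_nt₀).symm
      · rw [hLeq3, hLeq1]; exact (Set.disjoint_singleton_left.mpr hv0_nt₀).symm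
      · rw [hLeq3, hLeq2]; exact (hdis _ _ hL2_nt₀).symm
      · exact absurd rfl hne
    · intro i hi1 hi3 z hz
      interval_cases i
      · rw [hLeq1, Set.mem_singleton_iff] at hz
        subst hz
        refine ⟨u, ?_, hGuv0⟩
        show u ∈ L 0
        rw [hLeq0]; rfl
      · rw [hLeq2] at hz
        refine ⟨v0, ?_, hL2adj_v0 z hz⟩
        show v0 ∈ L 1
        rw [hLeq1]; rfl
      · rw [hLeq3] at hz
        obtain ⟨y, hy, hadj⟩ := ht₀L2 z hz
        refine ⟨y, ?_, hadj⟩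
        show y ∈ L 2
        rw [hLeq2]; exact hy
    · intro i j hi hj hne x hx y hy hadj
      interval_cases i <;> interval_cases j
      · exact absurd rfl hne
      · right; rfl
      · exfalso
        rw [hLeq0, Set.mem_singleton_iff] at hx
        rw [hLeq2] at hy
        subst hx
        exact hno_uL2 y hy hadj
      · exfalso
        rw [hLeq0, Set.mem_singleton_iff] at hx
        rw [hLeq3] at hy
        subst hx
        exact ht₀Nu y hy hadj
      · left; rfl
      · exact absurd rfl hne
      · right; rfl
      · exfalso
        rw [hLeq1, Set.mem_singleton_iff] at hx
        rw [hLeq3] at hy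
        subst hx
        exact hno_v0t₀ y hy hadj
      · exfalso
        rw [hLeq2] at hx
        rw [hLeq0, Set.mem_singleton_iff] at hy
        subst hy
        exact hno_uL2 x hx hadj.symm
      · left; rfl
      · exact absurd rfl hne
      · right; rfl
      · exfalso
        rw [hLeq3] at hx
        rw [hLeq0, Set.mem_singleton_iff] at hy
        subst hy
        exact ht₀Nu x hx hadj.symm
      · exfalso
        rw [hLeq3] at hx
        rw [hLeq1, Set.mem_singleton_iff] at hy
        subst hy
        exact hno_v0t₀ x hx hadj.symm
      · left; rfl
      · exact absurd rfl hne
    · rw [hLeq3]; exact hchrom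
    · rw [hLeq3]; exact hnd
    · rw [hLeq3]; exact hlib

  · -- CASE 1 : some level i ≥ 3 is not c-colorable
    push_neg at hcase
    obtain ⟨i, hi3, hinc⟩ := hcase
    obtain ⟨b, hib⟩ : ∃ b, i = b + 3 := ⟨i - 3, by omega⟩
    subst hib
    have hXi : ¬ (G.induce (Subtype.val '' D (b+3))).Colorable c := by
      intro h
      exact hinc (aux_colorable_image_val.mp h)
    obtain ⟨t₀, ht₀sub, ht₀nc, ht₀min⟩ := aux_exists_minimal_noncolorable hXi
    have herase : ∀ x ∈ t₀, (G.induce (↑(t₀.erase x) : Set V)).Colorable c := by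
      intro x hx
      refine ht₀min _ ?_ (Finset.card_erase_lt_of_mem hx)
      intro z hz
      exact ht₀sub (Finset.mem_coe.mpr (Finset.mem_of_mem_erase (Finset.mem_coe.mp hz)))
    obtain ⟨hchrom, hnd, hlib⟩ := aux_critical_lemma hc ht₀nc herase
    have ht₀ne : t₀.Nonempty := aux_noncolorable_nonempty ht₀nc
    set L : ℕ → Set V := fun j => if j < 3 then Subtype.val '' D (b + j) else (↑t₀ : Set V) with hL
    have hLeq : ∀ j, j < 3 → L j = Subtype.val '' D (b + j) := by
      intro j hj; simp [hL, hj]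
    have hLeq3 : L 3 = (↑t₀ : Set V) := by simp [hL]
    have hrep : ∀ j, j ≤ 3 → ∀ z ∈ L j, ∃ z' : ↥S, z'.1 = z ∧ H.dist vr z' = b + j := by
      intro j hj z hz
      by_cases hj3 : j < 3
      · rw [hLeq j hj3] at hz
        obtain ⟨z', hz'D, hz'v⟩ := hz
        exact ⟨z', hz'v, hz'D⟩
      · have hj' : j = 3 := by omega
        subst hj'
        rw [hLeq3] at hz
        obtain ⟨z', hz'D, hz'v⟩ := ht₀sub hz
        exact ⟨z', hz'v, hz'D⟩
    have hDneU : ∀ k, (D (k+1)).Nonempty → (D k).Nonempty := by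
      rintro k ⟨x, hx⟩
      obtain ⟨y, -, hyd⟩ := aux_exists_pred hconn (hx : H.dist vr x = k + 1)
      exact ⟨y, hyd⟩
    have hD3ne : (D (b+3)).Nonempty := by
      obtain ⟨w1, hw1⟩ := ht₀ne
      obtain ⟨z', hz'D, -⟩ := ht₀sub (Finset.mem_coe.mpr hw1)
      exact ⟨z', hz'D⟩
    have hD2ne : (D (b+2)).Nonempty := hDneU _ hD3ne
    have hD1ne : (D (b+1)).Nonempty := hDneU _ hD2ne
    have hD0ne : (D b).Nonempty := hDneU _ hD1ne
    refine ⟨3, L, le_refl 3, ⟨?_, ?_, ?_, ?_⟩, ?_, ?_, ?_⟩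
    · intro j hj
      interval_cases j
      · rw [hLeq 0 (by norm_num)]
        exact hD0ne.image _
      · rw [hLeq 1 (by norm_num)]
        exact hD1ne.image _
      · rw [hLeq 2 (by norm_num)]
        exact hD2ne.image _
      · rw [hLeq3]; exact Finset.coe_nonempty.mpr ht₀ne
    · intro p q hp hq hne
      rw [Set.disjoint_left]
      intro z hzp hzq
      obtain ⟨z1, hz1v, hz1d⟩ := hrep p hp z hzp
      obtain ⟨z2, hz2v, hz2d⟩ := hrep q hq z hzq
      have hzz : z1 = z2 := Subtype.ext (hz1v.trans hz2v.symm)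
      rw [hzz, hz2d] at hz1d
      omega
    · intro j hj1 hj3 z hz
      have hj3' : j - 1 < 3 := by omega
      obtain ⟨z', hz'v, hz'd⟩ := hrep j hj3 z hz
      obtain ⟨p, hpadj, hpd⟩ := aux_exists_pred hconn
        (show H.dist vr z' = (b + (j-1)) + 1 by omega)
      refine ⟨p.1, ?_, by rw [← hz'v]; exact hpadj⟩
      rw [hLeq (j-1) hj3']
      exact ⟨p, hpd, rfl⟩
    · intro p q hp hq hne x hx y hy hadj
      obtain ⟨x', hx'v, hx'd⟩ := hrep p hp x hx
      obtain ⟨y', hy'v, hy'd⟩ := hrep q hq y hy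
      have hadj' : H.Adj x' y' := by rw [← hx'v, ← hy'v] at hadj; exact hadj
      have h1 := aux_adj_dist_le hconn hadj' vr
      have h2 := aux_adj_dist_le hconn hadj'.symm vr
      rw [hx'd, hy'd] at h1 h2
      omega
    · rw [hLeq3]; exact hchrom
    · rw [hLeq3]; exact hnd
    · rw [hLeq3]; exact hlib
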